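/- arXiv:2310.20397 — 2 statements merged into one kernel-verified Lean document; each statement's English description precedes it below -/
import Mathlib

section
/- Let G ⊆ E be compact, let each T'_j be continuous with each T_i a self-map of G, let C := {x ∈ G : T_i x = x for every i with η_i > 0} be nonempty, and suppose the squared paracontraction-in-expectation property holds: Σ_{i∈𝕀} η_i ‖T_i x − y‖_p² < ‖x − y‖_p² for every y ∈ C and every x ∈ G \ C. Then the Markov operator 𝒫 is a paracontraction with respect to d_{W2,p}: for every Borel probability measure π supported in C and every μ ∈ 𝒫₂(G) with μ(G \ C) > 0, one has d_{W2,p}(μ𝒫, π) < d_{W2,p}(μ, π). -/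
open Finset MeasureTheory Filter
open scoped RealInnerProductSpace

set_option linter.unusedSectionVars false
set_option linter.unusedVariables false

noncomputable section

variable {m : ℕ} {I : Type*} [Fintype I]
variable {E : Fin m → Type*} [∀ j, NormedAddCommGroup (E j)]
  [∀ j, InnerProductSpace ℝ (E j)] [∀ j, FiniteDimensional ℝ (E j)]
variable [∀ j, MeasurableSpace (E j)] [∀ j, BorelSpace (E j)]
variable [MeasurableSpace (PiLp 2 E)] [BorelSpace (PiLp 2 E)]

/-- The blockwise map `T_i`: applies `T'_j` on the blocks `j ∈ M i`, identity elsewhere. -/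
def blockMap (M : I → Finset (Fin m)) (T' : ∀ j, PiLp 2 E → E j)
    (i : I) (x : PiLp 2 E) : PiLp 2 E :=
  WithLp.toLp 2 (fun j => if j ∈ M i then T' j x else x j)

/-- The squared weighted norm `‖z‖_p²  =  ∑ⱼ pⱼ⁻¹ ‖zⱼ‖²`. -/
def wNormSq (pw : Fin m → ℝ) (z : PiLp 2 E) : ℝ :=
  ∑ j, (pw j)⁻¹ * ‖z j‖ ^ 2

/-- The weighted norm `‖z‖_p`. -/
def wNorm (pw : Fin m → ℝ) (z : PiLp 2 E) : ℝ :=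
  Real.sqrt (wNormSq pw z)

/-- `γ` is a coupling of `μ` and `ν`. -/
def IsCoupling (γ : Measure (PiLp 2 E × PiLp 2 E)) (μ ν : Measure (PiLp 2 E)) : Prop :=
  IsProbabilityMeasure γ ∧ γ.map Prod.fst = μ ∧ γ.map Prod.snd = ν

/-- The transport cost `(∫ ‖x−y‖_p² dγ)^{1/2}` of a coupling `γ`. -/
def couplingCost (pw : Fin m → ℝ) (γ : Measure (PiLp 2 E × PiLp 2 E)) : ℝ :=
  Real.sqrt (∫ z, wNormSq pw (z.1 - z.2) ∂γ)

/-- The weighted Wasserstein-2 distance `d_{W2,p}`. -/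
def W2 (pw : Fin m → ℝ) (μ ν : Measure (PiLp 2 E)) : ℝ :=
  sInf {r | ∃ γ, IsCoupling γ μ ν ∧ r = couplingCost pw γ}

/-- `γ` is an optimal coupling of `(μ, ν)` w.r.t. `d_{W2,p}`. -/
def IsOptimalCoupling (pw : Fin m → ℝ) (γ : Measure (PiLp 2 E × PiLp 2 E))
    (μ ν : Measure (PiLp 2 E)) : Prop :=
  IsCoupling γ μ ν ∧ couplingCost pw γ = W2 pw μ ν

/-- The Markov operator `μ ↦ μ𝒫 = ∑ᵢ ηᵢ (Tᵢ)_* μ`. -/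
def markovOp (η : I → ℝ) (T : I → PiLp 2 E → PiLp 2 E)
    (μ : Measure (PiLp 2 E)) : Measure (PiLp 2 E) :=
  ∑ i : I, (ENNReal.ofReal (η i)) • μ.map (T i)

/-- `μ ∈ 𝒫₂(G)` : Borel probability measure concentrated on `G` with finite second moment. -/
def MemP2 (G : Set (PiLp 2 E)) (μ : Measure (PiLp 2 E)) : Prop :=
  IsProbabilityMeasure μ ∧ μ Gᶜ = 0 ∧ Integrable (fun x => ‖x‖ ^ 2) μ

/-- `d_{W2,p}(μ, inv𝒫)` : distance from `μ` to the invariant measures in `𝒫₂(G)`. -/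
def dInv (pw : Fin m → ℝ) (η : I → ℝ) (T : I → PiLp 2 E → PiLp 2 E)
    (G : Set (PiLp 2 E)) (μ : Measure (PiLp 2 E)) : ℝ :=
  sInf {r | ∃ π, markovOp η T π = π ∧ MemP2 G π ∧ r = W2 pw μ π}

/-- The expected weighted transport discrepancy `∑ᵢ ηᵢ ψ_p(x, y, Tᵢx, Tᵢy)`. -/
def discrep (pw : Fin m → ℝ) (η : I → ℝ) (T : I → PiLp 2 E → PiLp 2 E)
    (z : PiLp 2 E × PiLp 2 E) : ℝ :=
  ∑ i : I, η i * wNormSq pw ((z.1 - T i z.1) - (z.2 - T i z.2))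

/-- The invariant Markov transport discrepancy `Ψ`. -/
def Psi (pw : Fin m → ℝ) (η : I → ℝ) (T : I → PiLp 2 E → PiLp 2 E)
    (G : Set (PiLp 2 E)) (μ : Measure (PiLp 2 E)) : ℝ :=
  sInf {r | ∃ π γ, markovOp η T π = π ∧ MemP2 G π ∧ IsOptimalCoupling pw γ μ π ∧
    r = Real.sqrt (∫ z, discrep pw η T z ∂γ)}

lemma aux_wNormSq_cont (pw : Fin m → ℝ) : Continuous fun z : PiLp 2 E => wNormSq pw z := by
  unfold wNormSq
  exact continuous_finset_sum _ fun j _ => continuous_const.mul ((PiLp.continuous_apply 2 E j).norm.pow 2)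

lemma aux_wNormSq_nonneg (pw : Fin m → ℝ) (hp : ∀ j, 0 < pw j) (z : PiLp 2 E) :
    0 ≤ wNormSq pw z :=
  Finset.sum_nonneg fun j _ => mul_nonneg (inv_nonneg.2 (hp j).le) (by positivity)

lemma aux_blockMap_cont (M : I → Finset (Fin m)) (T' : ∀ j, PiLp 2 E → E j)
    (hcont : ∀ j, Continuous (T' j)) (i : I) : Continuous (blockMap M T' i) := by
  unfold blockMap
  exact (PiLp.continuous_toLp 2 E).comp <| continuous_pi fun j => by
    by_cases h : j ∈ M i
    · simpa [h] using (hcont j)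
    · simpa [h] using (PiLp.continuous_apply 2 E j)

lemma aux_map_finset_sum {α β : Type*} [MeasurableSpace α] [MeasurableSpace β] {ι : Type*}
    (s : Finset ι) (μ : ι → Measure α) {f : α → β} (hf : Measurable f) :
    (∑ i ∈ s, μ i).map f = ∑ i ∈ s, (μ i).map f := by
  classical
  induction s using Finset.induction_on with
  | empty => simp
  | insert _ _ h ih => rw [Finset.sum_insert h, Finset.sum_insert h, Measure.map_add _ _ hf, ih]

/-- on a compact set `G`, under the squared paracontraction-in-expectation property
w.r.t. the common fixed point set `C`, the Markov operator is a paracontraction w.r.t. `d_{W2,p}`. -/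
theorem statement6
    (M : I → Finset (Fin m)) (hM : ∀ i, (M i).Nonempty)
    (i₁ : I) (hi₁ : M i₁ = Finset.univ)
    (η : I → ℝ) (hη : ∀ i, 0 ≤ η i) (hηsum : ∑ i : I, η i = 1)
    (pw : Fin m → ℝ) (hpw : ∀ j, pw j = ∑ i : I, if j ∈ M i then η i else 0)
    (hp : ∀ j, 0 < pw j)
    (T' : ∀ j, PiLp 2 E → E j) (hcont : ∀ j, Continuous (T' j))
    (G : Set (PiLp 2 E)) (hG : IsCompact G)
    (hself : ∀ i, Set.MapsTo (blockMap M T' i) G G)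
    (C : Set (PiLp 2 E))
    (hC : C = {x ∈ G | ∀ i, 0 < η i → blockMap M T' i x = x})
    (hCne : C.Nonempty)
    (hpara : ∀ y ∈ C, ∀ x ∈ G \ C,
      ∑ i : I, η i * wNormSq pw (blockMap M T' i x - y) < wNormSq pw (x - y)) :
    ∀ π : Measure (PiLp 2 E), IsProbabilityMeasure π → π Cᶜ = 0 →
      ∀ μ : Measure (PiLp 2 E), MemP2 G μ → 0 < μ (G \ C) →
        W2 pw (markovOp η (blockMap M T') μ) π < W2 pw μ π := by
  intro π hπprob hπC μ hμ hμGC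
  haveI := hμ.1
  haveI := hπprob
  set T := blockMap M T' with hTdef
  have hTcont : ∀ i, Continuous (T i) := aux_blockMap_cont M T' hcont
  have hTmeas : ∀ i, Measurable (T i) := fun i => (hTcont i).measurable
  -- basic facts about C and G
  have hCsubG : C ⊆ G := by rw [hC]; exact fun x hx => hx.1
  have hCclosed : IsClosed C := by
    have hCeq : C = G ∩ ⋂ i, ⋂ _ : 0 < η i, {x | T i x = x} := by
      rw [hC]; ext x; simp [Set.mem_iInter, Set.mem_setOf_eq]
    rw [hCeq]
    exact hG.isClosed.inter (isClosed_iInter fun i => isClosed_iInter fun _ =>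
      isClosed_eq (hTcont i) continuous_id)
  have hCcompact : IsCompact C := hG.of_isClosed_subset hCclosed hCsubG
  have hGmeas : MeasurableSet G := hG.isClosed.measurableSet
  have hCmeas : MeasurableSet C := hCclosed.measurableSet
  -- the discrepancy function δ
  set f : PiLp 2 E × PiLp 2 E → ℝ := fun z => wNormSq pw (z.1 - z.2) with hfdef
  set g : PiLp 2 E × PiLp 2 E → ℝ := fun z => ∑ i : I, η i * wNormSq pw (T i z.1 - z.2) with hgdef
  have hfcont : Continuous f := (aux_wNormSq_cont pw).comp (continuous_fst.sub continuous_snd)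
  have hhcont : ∀ i : I, Continuous fun z : PiLp 2 E × PiLp 2 E => wNormSq pw (T i z.1 - z.2) :=
    fun i => (aux_wNormSq_cont pw).comp (((hTcont i).comp continuous_fst).sub continuous_snd)
  have hgcont : Continuous g := continuous_finset_sum _ fun i _ => continuous_const.mul (hhcont i)
  have hgnonneg : ∀ z, 0 ≤ g z := fun z =>
    Finset.sum_nonneg fun i _ => mul_nonneg (hη i) (aux_wNormSq_nonneg pw hp _)
  have hfnonneg : ∀ z, 0 ≤ f z := fun z => aux_wNormSq_nonneg pw hp _
  -- on C, g = f
  have hgf_eq : ∀ x ∈ C, ∀ y : PiLp 2 E, g (x, y) = f (x, y) := by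
    intro x hx y
    have hfix : ∀ i, 0 < η i → T i x = x := by
      rw [hC] at hx; exact hx.2
    have : ∀ i : I, η i * wNormSq pw (T i x - y) = η i * wNormSq pw (x - y) := by
      intro i
      rcases (hη i).eq_or_lt with h0 | h0
      · rw [← h0]; ring
      · rw [hfix i h0]
    simp only [hgdef, hfdef]
    rw [Finset.sum_congr rfl fun i _ => this i, ← Finset.sum_mul, hηsum, one_mul]
  -- δ nonneg on G × C
  have hδnonneg : ∀ z : PiLp 2 E × PiLp 2 E, z.1 ∈ G → z.2 ∈ C → 0 ≤ f z - g z := by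
    intro z hxG hyC
    by_cases hxC : z.1 ∈ C
    · have := hgf_eq z.1 hxC z.2
      simp only [hfdef, hgdef] at this ⊢
      simp only [this]
      simp
    · have := hpara z.2 hyC z.1 ⟨hxG, hxC⟩
      simp only [hfdef, hgdef]
      simp only [sub_nonneg]
      exact this.le
  -- compact K ⊆ G \ C of positive measure
  have hGCmeas : MeasurableSet (G \ C) := hGmeas.diff hCmeas
  obtain ⟨K, hKsub, hKcomp, hK0⟩ := hGCmeas.exists_lt_isCompact hμGC
  have hKmeas : MeasurableSet K := hKcomp.isClosed.measurableSet
  have hKne : K.Nonempty := nonempty_of_measure_ne_zero hK0.ne'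
  -- minimum ε of δ on K × C
  obtain ⟨z₀, hz₀, hmin⟩ := (hKcomp.prod hCcompact).exists_isMinOn (hKne.prod hCne)
    ((hfcont.sub hgcont).continuousOn)
  set ε : ℝ := f z₀ - g z₀ with hεdef
  have hεpos : 0 < ε := by
    have h1 : z₀.1 ∈ G \ C := hKsub hz₀.1
    have := hpara z₀.2 hz₀.2 z₀.1 h1
    simp only [hεdef, hfdef, hgdef]
    linarith [this]
  set c : ℝ := ε * (μ K).toReal with hcdef
  have hcpos : 0 < c := mul_pos hεpos (ENNReal.toReal_pos hK0.ne' (measure_ne_top μ K))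
  -- the key per-coupling estimate
  have key : ∀ γ : Measure (PiLp 2 E × PiLp 2 E), IsCoupling γ μ π →
      ∃ γ', IsCoupling γ' (markovOp η T μ) π ∧
        (couplingCost pw γ') ^ 2 + c ≤ (couplingCost pw γ) ^ 2 := by
    intro γ hγ
    obtain ⟨hγprob, hγ1, hγ2⟩ := hγ
    haveI := hγprob
    set Φ : I → PiLp 2 E × PiLp 2 E → PiLp 2 E × PiLp 2 E := fun i z => (T i z.1, z.2) with hΦdef
    have hΦmeas : ∀ i, Measurable (Φ i) := fun i =>
      ((hTmeas i).comp measurable_fst).prodMk measurable_snd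
    have hΦcont : ∀ i, Continuous (Φ i) := fun i =>
      ((hTcont i).comp continuous_fst).prodMk continuous_snd
    have hfst0 : γ (Prod.fst ⁻¹' Gᶜ) = 0 := by
      rw [← Measure.map_apply measurable_fst hGmeas.compl, hγ1]; exact hμ.2.1
    have hsnd0 : γ (Prod.snd ⁻¹' Cᶜ) = 0 := by
      rw [← Measure.map_apply measurable_snd hCmeas.compl, hγ2]; exact hπC
    have haeS : ∀ᵐ z ∂γ, z ∈ G ×ˢ C := by
      rw [ae_iff]
      refine measure_mono_null ?_ (measure_union_null hfst0 hsnd0)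
      intro z hz
      simp only [Set.mem_setOf_eq, Set.mem_prod, not_and_or] at hz
      rcases hz with h | h
      · exact Or.inl h
      · exact Or.inr h
    have hint : ∀ q : PiLp 2 E × PiLp 2 E → ℝ, Continuous q → Integrable q γ := by
      intro q hq
      obtain ⟨Bq, hBq⟩ := (hG.prod hCcompact).exists_bound_of_continuousOn hq.continuousOn
      exact (integrable_const Bq).mono' hq.aestronglyMeasurable
        (by filter_upwards [haeS] with z hz using hBq z hz)
    set γ' : Measure (PiLp 2 E × PiLp 2 E) :=
      ∑ i : I, (ENNReal.ofReal (η i)) • γ.map (Φ i) with hγ'def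
    have hmapfst : γ'.map Prod.fst = markovOp η T μ := by
      have hterm : ∀ i : I, ((ENNReal.ofReal (η i)) • γ.map (Φ i)).map Prod.fst
          = (ENNReal.ofReal (η i)) • μ.map (T i) := by
        intro i
        rw [Measure.map_smul, Measure.map_map measurable_fst (hΦmeas i),
          show (Prod.fst ∘ Φ i) = (T i ∘ Prod.fst) from rfl,
          ← Measure.map_map (hTmeas i) measurable_fst, hγ1]
      rw [hγ'def, aux_map_finset_sum Finset.univ _ measurable_fst]
      simp_rw [hterm]
      rfl
    have hmapsnd : γ'.map Prod.snd = π := by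
      have hterm : ∀ i : I, ((ENNReal.ofReal (η i)) • γ.map (Φ i)).map Prod.snd
          = (ENNReal.ofReal (η i)) • π := by
        intro i
        rw [Measure.map_smul, Measure.map_map measurable_snd (hΦmeas i),
          show (Prod.snd ∘ Φ i) = (Prod.snd : PiLp 2 E × PiLp 2 E → PiLp 2 E) from rfl, hγ2]
      rw [hγ'def, aux_map_finset_sum Finset.univ _ measurable_snd]
      simp_rw [hterm]
      rw [← Finset.sum_smul, ← ENNReal.ofReal_sum_of_nonneg (fun i _ => hη i),
        hηsum, ENNReal.ofReal_one, one_smul]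
    have hγ'prob : IsProbabilityMeasure γ' := by
      have h := congrArg (fun ν : Measure (PiLp 2 E) => ν Set.univ) hmapsnd
      simp only [Measure.map_apply measurable_snd MeasurableSet.univ, Set.preimage_univ,
        measure_univ] at h
      exact ⟨h⟩
    have hintΦ : ∀ i : I, Integrable f (γ.map (Φ i)) := by
      intro i
      rw [integrable_map_measure hfcont.aestronglyMeasurable (hΦmeas i).aemeasurable]
      exact hint _ (hfcont.comp (hΦcont i))
    have hIγ' : ∫ z, f z ∂γ' = ∑ i : I, η i * ∫ z, wNormSq pw (T i z.1 - z.2) ∂γ := by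
      rw [hγ'def, integral_finset_sum_measure
        (fun i _ => (hintΦ i).smul_measure ENNReal.ofReal_ne_top)]
      refine Finset.sum_congr rfl fun i _ => ?_
      rw [integral_smul_measure, integral_map (hΦmeas i).aemeasurable hfcont.aestronglyMeasurable,
        ENNReal.toReal_ofReal (hη i), smul_eq_mul]
    have hIg : ∫ z, g z ∂γ = ∑ i : I, η i * ∫ z, wNormSq pw (T i z.1 - z.2) ∂γ := by
      have h1 : ∫ z, g z ∂γ = ∑ i : I, ∫ z, η i * wNormSq pw (T i z.1 - z.2) ∂γ :=
        integral_finset_sum _ (fun i _ => hint _ (continuous_const.mul (hhcont i)))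
      rw [h1]
      exact Finset.sum_congr rfl fun i _ => integral_const_mul _ _
    have hindint : Integrable ((K ×ˢ C).indicator fun _ => ε) γ :=
      (integrable_const ε).indicator (hKmeas.prod hCmeas)
    have hptwise : ∀ᵐ z ∂γ, (K ×ˢ C).indicator (fun _ => ε) z ≤ f z - g z := by
      filter_upwards [haeS] with z hz
      by_cases hzK : z ∈ K ×ˢ C
      · rw [Set.indicator_of_mem hzK]
        have h : f z₀ - g z₀ ≤ f z - g z := hmin hzK
        rw [hεdef]
        exact h
      · rw [Set.indicator_of_notMem hzK]
        exact hδnonneg z hz.1 hz.2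
    have hIδ : c ≤ ∫ z, (f z - g z) ∂γ := by
      have h1 : ∫ z, (K ×ˢ C).indicator (fun _ => ε) z ∂γ ≤ ∫ z, (f z - g z) ∂γ :=
        integral_mono_ae hindint ((hint f hfcont).sub (hint g hgcont)) hptwise
      have h2 : ∫ z, (K ×ˢ C).indicator (fun _ => ε) z ∂γ = (γ (K ×ˢ C)).toReal * ε := by
        rw [integral_indicator_const _ (hKmeas.prod hCmeas), smul_eq_mul, measureReal_def]
      have h3 : μ K ≤ γ (K ×ˢ C) := by
        have hsub : K ×ˢ (Set.univ : Set (PiLp 2 E)) ⊆ (K ×ˢ C) ∪ Prod.snd ⁻¹' Cᶜ := by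
          rintro ⟨a, b⟩ ⟨ha, -⟩
          by_cases hb : b ∈ C
          · exact Or.inl ⟨ha, hb⟩
          · exact Or.inr hb
        have hKuniv : γ (K ×ˢ (Set.univ : Set (PiLp 2 E))) = μ K := by
          rw [Set.prod_univ, ← Measure.map_apply measurable_fst hKmeas, hγ1]
        calc μ K = γ (K ×ˢ Set.univ) := hKuniv.symm
          _ ≤ γ ((K ×ˢ C) ∪ Prod.snd ⁻¹' Cᶜ) := measure_mono hsub
          _ ≤ γ (K ×ˢ C) + γ (Prod.snd ⁻¹' Cᶜ) := measure_union_le _ _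
          _ = γ (K ×ˢ C) := by rw [hsnd0, add_zero]
      have h4 : (μ K).toReal ≤ (γ (K ×ˢ C)).toReal :=
        (ENNReal.toReal_le_toReal (measure_ne_top μ K) (measure_ne_top γ _)).mpr h3
      calc c = ε * (μ K).toReal := hcdef
        _ ≤ ε * (γ (K ×ˢ C)).toReal := by nlinarith
        _ = (γ (K ×ˢ C)).toReal * ε := mul_comm _ _
        _ = ∫ z, (K ×ˢ C).indicator (fun _ => ε) z ∂γ := h2.symm
        _ ≤ ∫ z, (f z - g z) ∂γ := h1
    refine ⟨γ', ⟨hγ'prob, hmapfst, hmapsnd⟩, ?_⟩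
    have hIfg : ∫ z, f z ∂γ' = ∫ z, g z ∂γ := by rw [hIγ', hIg]
    have hIγnn : 0 ≤ ∫ z, g z ∂γ := integral_nonneg hgnonneg
    have hsubint : ∫ z, (f z - g z) ∂γ = ∫ z, f z ∂γ - ∫ z, g z ∂γ :=
      integral_sub (hint f hfcont) (hint g hgcont)
    have hcost' : (couplingCost pw γ') ^ 2 = ∫ z, g z ∂γ := by
      rw [show couplingCost pw γ' = Real.sqrt (∫ z, f z ∂γ') from rfl, hIfg, Real.sq_sqrt hIγnn]
    have hcost : (couplingCost pw γ) ^ 2 = ∫ z, f z ∂γ := by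
      rw [show couplingCost pw γ = Real.sqrt (∫ z, f z ∂γ) from rfl,
        Real.sq_sqrt (integral_nonneg hfnonneg)]
    rw [hcost', hcost]
    linarith
  -- nonemptiness of coupling sets
  have hcoup₀ : IsCoupling (μ.prod π) μ π := by
    refine ⟨by infer_instance, ?_, ?_⟩
    · rw [Measure.map_fst_prod]; simp
    · rw [Measure.map_snd_prod]; simp
  -- conclude
  set Sold := {r | ∃ γ, IsCoupling γ μ π ∧ r = couplingCost pw γ} with hSold
  set Snew := {r | ∃ γ, IsCoupling γ (markovOp η T μ) π ∧ r = couplingCost pw γ} with hSnew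
  have hW2new : W2 pw (markovOp η T μ) π = sInf Snew := rfl
  have hW2old : W2 pw μ π = sInf Sold := rfl
  obtain ⟨γ₀', hγ₀', _⟩ := key _ hcoup₀
  have hSnew_ne : Snew.Nonempty := ⟨couplingCost pw γ₀', γ₀', hγ₀', rfl⟩
  have hSnew_bdd : BddBelow Snew := ⟨0, fun r ⟨γ, _, hr⟩ => hr ▸ Real.sqrt_nonneg _⟩
  have hBnonneg : 0 ≤ W2 pw (markovOp η T μ) π := by
    rw [hW2new]
    exact Real.sInf_nonneg (fun r ⟨γ, _, hr⟩ => hr ▸ Real.sqrt_nonneg _)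
  set B := W2 pw (markovOp η T μ) π with hBdef
  have hkey2 : ∀ γ : Measure (PiLp 2 E × PiLp 2 E), IsCoupling γ μ π →
      Real.sqrt (B ^ 2 + c) ≤ couplingCost pw γ := by
    intro γ hγ
    obtain ⟨γ', hγ', hle⟩ := key γ hγ
    have hBle : B ≤ couplingCost pw γ' := by
      rw [hW2new]
      exact csInf_le hSnew_bdd ⟨γ', hγ', rfl⟩
    have h2 : B ^ 2 + c ≤ (couplingCost pw γ) ^ 2 := by
      have := pow_le_pow_left₀ hBnonneg hBle 2
      linarith
    calc Real.sqrt (B ^ 2 + c) ≤ Real.sqrt ((couplingCost pw γ) ^ 2) := Real.sqrt_le_sqrt h2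
      _ = couplingCost pw γ := Real.sqrt_sq (Real.sqrt_nonneg _)
  have hA : Real.sqrt (B ^ 2 + c) ≤ W2 pw μ π := by
    rw [hW2old]
    have hne : Sold.Nonempty := ⟨couplingCost pw (μ.prod π), μ.prod π, hcoup₀, rfl⟩
    refine le_csInf hne ?_
    rintro r ⟨γ, hγ, rfl⟩
    exact hkey2 γ hγ
  have hBlt : B < Real.sqrt (B ^ 2 + c) := by
    have h1 : B = Real.sqrt (B ^ 2) := (Real.sqrt_sq hBnonneg).symm
    nth_rewrite 1 [h1]
    exact Real.sqrt_lt_sqrt (by positivity) (by nlinarith)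
  exact lt_of_lt_of_le hBlt hA
end
end

section
/- Let G ⊆ E be compact, each T'_j continuous with each T_i a self-map of G, let C := {x ∈ G : T_i x = x for every i with η_i > 0} be nonempty, and suppose Σ_{i∈𝕀} η_i ‖T_i x − y‖_p² < ‖x − y‖_p² for every y ∈ C and x ∈ G \ C. Suppose θ : [0,∞) → [0,∞) is continuous with θ(0) = 0 and 0 < θ(t) ≤ t for t ∈ (0, t̄), that for EVERY μ₀ ∈ 𝒫₂(G) the sequence μ_{k+1} := μ_k𝒫 satisfies d_{W2,p}(μ_{k+1}, inv𝒫) ≤ θ(d_{W2,p}(μ_k, inv𝒫)) for all k, and that (Id − θ)⁻¹ exists on [0,∞), is continuous and strictly increasing with (Id − θ)⁻¹(0) = 0. Then Ψ is gauge metrically subregular for 0 with gauge (Id − θ)⁻¹: for every μ ∈ 𝒫₂(G), d_{W2,p}(μ, inv𝒫) ≤ (Id − θ)⁻¹(Ψ(μ)). -/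
open Finset MeasureTheory Filter
open scoped RealInnerProductSpace

noncomputable section

variable {m : ℕ} {I : Type*} [Fintype I]
variable {E : Fin m → Type*} [∀ j, NormedAddCommGroup (E j)]
  [∀ j, InnerProductSpace ℝ (E j)] [∀ j, FiniteDimensional ℝ (E j)]
variable [∀ j, MeasurableSpace (E j)] [∀ j, BorelSpace (E j)]
variable [MeasurableSpace (PiLp 2 E)] [BorelSpace (PiLp 2 E)]

set_option linter.unusedSectionVars false

-- basic lemmas
variable {pw : Fin m → ℝ}

lemma wNormSq_nonneg (hp : ∀ j, 0 < pw j) (z : PiLp 2 E) : 0 ≤ wNormSq pw z :=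
  Finset.sum_nonneg fun j _ => mul_nonneg (inv_nonneg.2 (hp j).le) (by positivity)

lemma wNorm_nonneg (z : PiLp 2 E) : 0 ≤ wNorm pw z := Real.sqrt_nonneg _

lemma sq_wNorm (hp : ∀ j, 0 < pw j) (z : PiLp 2 E) : wNorm pw z ^ 2 = wNormSq pw z :=
  Real.sq_sqrt (wNormSq_nonneg hp z)

lemma wNormSq_le_sq (hp : ∀ j, 0 < pw j) {z : PiLp 2 E} {c : ℝ} (h : wNorm pw z ≤ c) :
    wNormSq pw z ≤ c ^ 2 := by
  rw [← sq_wNorm hp]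
  exact pow_le_pow_left₀ (wNorm_nonneg z) h 2

lemma continuous_wNormSq : Continuous fun z : PiLp 2 E => wNormSq pw z := by
  unfold wNormSq
  refine continuous_finset_sum _ fun j _ => Continuous.mul continuous_const ?_
  exact (continuous_norm.comp (PiLp.continuous_apply 2 E j)).pow 2

lemma continuous_wNorm : Continuous fun z : PiLp 2 E => wNorm pw z :=
  Real.continuous_sqrt.comp continuous_wNormSq

lemma wNorm_add_le (hp : ∀ j, 0 < pw j) (u v : PiLp 2 E) :
    wNorm pw (u + v) ≤ wNorm pw u + wNorm pw v := by
  have h1 : wNormSq pw (u + v) ≤ (wNorm pw u + wNorm pw v) ^ 2 := by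
    have hexp : ∀ j, (pw j)⁻¹ * ‖(u + v) j‖ ^ 2 ≤
        (pw j)⁻¹ * ‖u j‖ ^ 2 + 2 * ((Real.sqrt ((pw j)⁻¹ * ‖u j‖ ^ 2)) *
          (Real.sqrt ((pw j)⁻¹ * ‖v j‖ ^ 2))) + (pw j)⁻¹ * ‖v j‖ ^ 2 := by
      intro j
      have hnv : ‖(u + v) j‖ ≤ ‖u j‖ + ‖v j‖ := by
        have : (u + v) j = u j + v j := rfl
        rw [this]; exact norm_add_le _ _
      have hinv : (0:ℝ) ≤ (pw j)⁻¹ := inv_nonneg.2 (hp j).le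
      have hs : Real.sqrt ((pw j)⁻¹ * ‖u j‖ ^ 2) * Real.sqrt ((pw j)⁻¹ * ‖v j‖ ^ 2)
          = (pw j)⁻¹ * (‖u j‖ * ‖v j‖) := by
        rw [← Real.sqrt_mul (by positivity)]
        have : (pw j)⁻¹ * ‖u j‖ ^ 2 * ((pw j)⁻¹ * ‖v j‖ ^ 2)
            = ((pw j)⁻¹ * (‖u j‖ * ‖v j‖)) ^ 2 := by ring
        rw [this, Real.sqrt_sq (by positivity)]
      rw [hs]
      calc (pw j)⁻¹ * ‖(u + v) j‖ ^ 2 ≤ (pw j)⁻¹ * (‖u j‖ + ‖v j‖) ^ 2 := by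
            apply mul_le_mul_of_nonneg_left _ hinv
            exact pow_le_pow_left₀ (norm_nonneg _) hnv 2
        _ = (pw j)⁻¹ * ‖u j‖ ^ 2 + 2 * ((pw j)⁻¹ * (‖u j‖ * ‖v j‖)) + (pw j)⁻¹ * ‖v j‖ ^ 2 := by
            ring
    calc wNormSq pw (u + v) ≤ ∑ j, ((pw j)⁻¹ * ‖u j‖ ^ 2 + 2 * ((Real.sqrt ((pw j)⁻¹ * ‖u j‖ ^ 2)) *
          (Real.sqrt ((pw j)⁻¹ * ‖v j‖ ^ 2))) + (pw j)⁻¹ * ‖v j‖ ^ 2) :=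
        Finset.sum_le_sum fun j _ => hexp j
      _ = wNormSq pw u + 2 * (∑ j, Real.sqrt ((pw j)⁻¹ * ‖u j‖ ^ 2) *
            Real.sqrt ((pw j)⁻¹ * ‖v j‖ ^ 2)) + wNormSq pw v := by
          rw [Finset.sum_add_distrib, Finset.sum_add_distrib, ← Finset.mul_sum]; rfl
      _ ≤ wNormSq pw u + 2 * (Real.sqrt (wNormSq pw u) * Real.sqrt (wNormSq pw v))
            + wNormSq pw v := by
          have := Real.sum_sqrt_mul_sqrt_le (Finset.univ (α := Fin m))
            (f := fun j => (pw j)⁻¹ * ‖u j‖ ^ 2) (g := fun j => (pw j)⁻¹ * ‖v j‖ ^ 2)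
            (fun j => mul_nonneg (inv_nonneg.2 (hp j).le) (sq_nonneg _))
            (fun j => mul_nonneg (inv_nonneg.2 (hp j).le) (sq_nonneg _))
          have h2 : (0:ℝ) ≤ 2 := by norm_num
          unfold wNormSq
          nlinarith [this]
      _ = (wNorm pw u + wNorm pw v) ^ 2 := by
          unfold wNorm wNormSq
          have hu : (0:ℝ) ≤ ∑ j, (pw j)⁻¹ * ‖u j‖ ^ 2 := wNormSq_nonneg hp u
          have hv : (0:ℝ) ≤ ∑ j, (pw j)⁻¹ * ‖v j‖ ^ 2 := wNormSq_nonneg hp v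
          rw [add_sq, Real.sq_sqrt hu, Real.sq_sqrt hv]; ring
  have := Real.sqrt_le_sqrt h1
  rwa [Real.sqrt_sq (add_nonneg (wNorm_nonneg u) (wNorm_nonneg v))] at this









/- ### measure-theoretic helpers -/

lemma couplingCost_nonneg (γ : Measure (PiLp 2 E × PiLp 2 E)) :
    0 ≤ couplingCost pw γ := Real.sqrt_nonneg _

lemma W2_nonneg (μ ν : Measure (PiLp 2 E)) : 0 ≤ W2 pw μ ν :=
  Real.sInf_nonneg fun r hr => by obtain ⟨γ, _, rfl⟩ := hr; exact couplingCost_nonneg γ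

lemma W2_bddBelow (μ ν : Measure (PiLp 2 E)) :
    BddBelow {r | ∃ γ, IsCoupling γ μ ν ∧ r = couplingCost pw γ} :=
  ⟨0, fun r hr => by obtain ⟨γ, _, rfl⟩ := hr; exact couplingCost_nonneg γ⟩

lemma W2_le_cost {γ : Measure (PiLp 2 E × PiLp 2 E)} {μ ν : Measure (PiLp 2 E)}
    (h : IsCoupling γ μ ν) : W2 pw μ ν ≤ couplingCost pw γ :=
  csInf_le (W2_bddBelow μ ν) ⟨γ, h, rfl⟩

lemma dInv_nonneg {η : I → ℝ} {T : I → PiLp 2 E → PiLp 2 E} {G : Set (PiLp 2 E)}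
    (μ : Measure (PiLp 2 E)) : 0 ≤ dInv pw η T G μ :=
  Real.sInf_nonneg fun r hr => by obtain ⟨π, _, _, rfl⟩ := hr; exact W2_nonneg μ π

lemma dInv_bddBelow {η : I → ℝ} {T : I → PiLp 2 E → PiLp 2 E} {G : Set (PiLp 2 E)}
    (μ : Measure (PiLp 2 E)) :
    BddBelow {r | ∃ π, markovOp η T π = π ∧ MemP2 G π ∧ r = W2 pw μ π} :=
  ⟨0, fun r hr => by obtain ⟨π, _, _, rfl⟩ := hr; exact W2_nonneg μ π⟩

lemma dInv_le {η : I → ℝ} {T : I → PiLp 2 E → PiLp 2 E} {G : Set (PiLp 2 E)}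
    {μ π : Measure (PiLp 2 E)} (hπ : markovOp η T π = π) (hP2 : MemP2 G π) :
    dInv pw η T G μ ≤ W2 pw μ π :=
  csInf_le (dInv_bddBelow μ) ⟨π, hπ, hP2, rfl⟩

lemma Psi_nonneg {η : I → ℝ} {T : I → PiLp 2 E → PiLp 2 E} {G : Set (PiLp 2 E)}
    (μ : Measure (PiLp 2 E)) : 0 ≤ Psi pw η T G μ :=
  Real.sInf_nonneg fun r hr => by
    obtain ⟨π, γ, _, _, _, rfl⟩ := hr; exact Real.sqrt_nonneg _

lemma ae_mem_of_compl {α : Type*} [MeasurableSpace α] {μ : Measure α} {s : Set α}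
    (h : μ sᶜ = 0) : ∀ᵐ x ∂μ, x ∈ s := by
  rw [ae_iff]; exact h

lemma ae_map_mem {α β : Type*} [MeasurableSpace α] [MeasurableSpace β]
    {μ : Measure α} {φ : α → β} (hφ : Measurable φ) {s : Set β} (hs : MeasurableSet s)
    (h : (μ.map φ) sᶜ = 0) : ∀ᵐ x ∂μ, φ x ∈ s := by
  rw [Measure.map_apply hφ hs.compl] at h
  rw [ae_iff]
  exact h

lemma integrable_of_conc {α : Type*} [MeasurableSpace α] [TopologicalSpace α]
    [OpensMeasurableSpace α] {μ : Measure α} [IsFiniteMeasure μ] {s : Set α}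
    (hs : IsCompact s) (hμ : μ sᶜ = 0) {f : α → ℝ} (hf : Continuous f) :
    Integrable f μ := by
  obtain ⟨C, hC⟩ := hs.exists_bound_of_continuousOn hf.continuousOn
  refine Integrable.mono' (integrable_const C) hf.aestronglyMeasurable ?_
  filter_upwards [ae_mem_of_compl hμ] with x hx using hC x hx

/- ### weighted sums of pushforward measures -/

section wsum

variable {β : Type*} [MeasurableSpace β]

lemma wsum_apply (η : I → ℝ) (ν : I → Measure β) (s : Set β) :
    (∑ i : I, (ENNReal.ofReal (η i)) • ν i) s = ∑ i : I, (ENNReal.ofReal (η i)) * ν i s := by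
  simp [Measure.finset_sum_apply, Measure.smul_apply, smul_eq_mul]

lemma wsum_prob (η : I → ℝ) (hη : ∀ i, 0 ≤ η i) (hηsum : ∑ i : I, η i = 1)
    (ν : I → Measure β) (hν : ∀ i, IsProbabilityMeasure (ν i)) :
    IsProbabilityMeasure (∑ i : I, (ENNReal.ofReal (η i)) • ν i) := by
  constructor
  rw [wsum_apply]
  have : ∀ i : I, (ENNReal.ofReal (η i)) * ν i Set.univ = ENNReal.ofReal (η i) := by
    intro i; rw [(hν i).measure_univ, mul_one]
  rw [Finset.sum_congr rfl (fun i _ => this i), ← ENNReal.ofReal_sum_of_nonneg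
    (fun i _ => hη i), hηsum, ENNReal.ofReal_one]

lemma wsum_conc (η : I → ℝ) (ν : I → Measure β) {s : Set β}
    (hν : ∀ i, 0 < η i → ν i sᶜ = 0) :
    (∑ i : I, (ENNReal.ofReal (η i)) • ν i) sᶜ = 0 := by
  rw [wsum_apply]
  refine Finset.sum_eq_zero fun i _ => ?_
  rcases lt_or_ge 0 (η i) with h | h
  · rw [hν i h, mul_zero]
  · rw [ENNReal.ofReal_eq_zero.2 h, zero_mul]

lemma map_wsum {β' : Type*} [MeasurableSpace β'] (η : I → ℝ) (ν : I → Measure β)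
    {φ : β → β'} (hφ : Measurable φ) :
    (∑ i : I, (ENNReal.ofReal (η i)) • ν i).map φ
      = ∑ i : I, (ENNReal.ofReal (η i)) • (ν i).map φ := by
  ext s hs
  rw [Measure.map_apply hφ hs, wsum_apply, wsum_apply]
  refine Finset.sum_congr rfl fun i _ => ?_
  rw [Measure.map_apply hφ hs]

lemma integral_wsum_map (η : I → ℝ) (hη : ∀ i, 0 ≤ η i) {α : Type*} [MeasurableSpace α]
    (μ : Measure α) (g : I → α → β) (hg : ∀ i, Measurable (g i)) (f : β → ℝ)
    (hf : ∀ i, AEStronglyMeasurable f ((μ.map (g i))))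
    (hint : ∀ i, Integrable (fun x => f (g i x)) μ) :
    ∫ y, f y ∂(∑ i : I, (ENNReal.ofReal (η i)) • μ.map (g i))
      = ∑ i : I, η i * ∫ x, f (g i x) ∂μ := by
  have hI : ∀ i : I, Integrable f ((ENNReal.ofReal (η i)) • μ.map (g i)) := by
    intro i
    refine Integrable.smul_measure ?_ ENNReal.ofReal_ne_top
    exact (integrable_map_measure (hf i) (hg i).aemeasurable).2 (hint i)
  rw [integral_finset_sum_measure fun i _ => hI i]
  refine Finset.sum_congr rfl fun i _ => ?_
  rw [integral_smul_measure, ENNReal.toReal_ofReal (hη i),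
    integral_map (hg i).aemeasurable (hf i), smul_eq_mul]

end wsum

/- ### Markov operator basics -/

variable {η : I → ℝ} {T : I → PiLp 2 E → PiLp 2 E} {G : Set (PiLp 2 E)}

lemma markovOp_prob (hη : ∀ i, 0 ≤ η i) (hηsum : ∑ i : I, η i = 1)
    (hT : ∀ i, Measurable (T i)) (μ : Measure (PiLp 2 E)) [IsProbabilityMeasure μ] :
    IsProbabilityMeasure (markovOp η T μ) :=
  wsum_prob η hη hηsum _ fun i => Measure.isProbabilityMeasure_map (hT i).aemeasurable

lemma markovOp_conc (hT : ∀ i, Measurable (T i)) (hself : ∀ i, Set.MapsTo (T i) G G)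
    (hG : MeasurableSet G) {μ : Measure (PiLp 2 E)} (hμ : μ Gᶜ = 0) :
    (markovOp η T μ) Gᶜ = 0 := by
  refine wsum_conc η _ fun i _ => ?_
  rw [Measure.map_apply (hT i) hG.compl]
  refine measure_mono_null ?_ hμ
  intro x hx hxG
  exact hx (hself i hxG)

lemma markovOp_integral (hη : ∀ i, 0 ≤ η i) (hT : ∀ i, Measurable (T i))
    (μ : Measure (PiLp 2 E)) {f : PiLp 2 E → ℝ} (hf : Continuous f)
    (hint : ∀ i, Integrable (fun x => f (T i x)) μ) :
    ∫ y, f y ∂(markovOp η T μ) = ∑ i : I, η i * ∫ x, f (T i x) ∂μ :=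
  integral_wsum_map η hη μ T hT f (fun _ => hf.aestronglyMeasurable) hint

lemma memP2_of_conc (hG : IsCompact G) {μ : Measure (PiLp 2 E)}
    (hprob : IsProbabilityMeasure μ) (hconc : μ Gᶜ = 0) : MemP2 G μ :=
  ⟨hprob, hconc, integrable_of_conc hG hconc (by continuity)⟩

lemma markovOp_memP2 (hη : ∀ i, 0 ≤ η i) (hηsum : ∑ i : I, η i = 1)
    (hT : ∀ i, Measurable (T i)) (hself : ∀ i, Set.MapsTo (T i) G G) (hG : IsCompact G)
    {μ : Measure (PiLp 2 E)} (hμ : MemP2 G μ) : MemP2 G (markovOp η T μ) := by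
  have := hμ.1
  exact memP2_of_conc hG (markovOp_prob hη hηsum hT μ)
    (markovOp_conc hT hself hG.isClosed.measurableSet hμ.2.1)

lemma markovOp_dirac (hT : ∀ i, Measurable (T i)) (hηsum : ∑ i : I, η i = 1)
    (hη : ∀ i, 0 ≤ η i) {c : PiLp 2 E} (hc : ∀ i, 0 < η i → T i c = c) :
    markovOp η T (Measure.dirac c) = Measure.dirac c := by
  unfold markovOp
  have : ∀ i : I, (ENNReal.ofReal (η i)) • (Measure.dirac c).map (T i)
      = (ENNReal.ofReal (η i)) • Measure.dirac c := by
    intro i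
    rcases lt_or_ge 0 (η i) with h | h
    · rw [Measure.map_dirac' (hT i), hc i h]
    · rw [ENNReal.ofReal_eq_zero.2 h, zero_smul, zero_smul]
  rw [Finset.sum_congr rfl fun i _ => this i, ← Finset.sum_smul,
    ← ENNReal.ofReal_sum_of_nonneg (fun i _ => hη i), hηsum, ENNReal.ofReal_one, one_smul]

/- ### couplings with a Dirac measure -/

example (c : PiLp 2 E) : MeasurableSet ({c} : Set (PiLp 2 E)) := by
  exact measurableSet_singleton c

lemma memP2_dirac (hG : IsCompact G) {c : PiLp 2 E} (hc : c ∈ G) :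
    MemP2 G (Measure.dirac c) := by
  refine memP2_of_conc hG (by infer_instance) ?_
  rw [Measure.dirac_apply' _ hG.isClosed.measurableSet.compl]
  simp [hc]

lemma isCoupling_prod (μ ν : Measure (PiLp 2 E)) [IsProbabilityMeasure μ]
    [IsProbabilityMeasure ν] : IsCoupling (μ.prod ν) μ ν :=
  ⟨by infer_instance, Measure.fst_prod, Measure.snd_prod⟩

lemma cost_coupling_dirac (hp : ∀ j, 0 < pw j) {γ : Measure (PiLp 2 E × PiLp 2 E)}
    {μ : Measure (PiLp 2 E)} {c : PiLp 2 E} (h : IsCoupling γ μ (Measure.dirac c)) :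
    couplingCost pw γ = Real.sqrt (∫ x, wNormSq pw (x - c) ∂μ) := by
  have hae : ∀ᵐ z ∂γ, z.2 ∈ ({c} : Set (PiLp 2 E)) := by
    refine ae_map_mem measurable_snd (measurableSet_singleton c) ?_
    rw [h.2.2, Measure.dirac_apply' _ (measurableSet_singleton c).compl]
    simp
  unfold couplingCost
  congr 1
  have h1 : ∫ z, wNormSq pw (z.1 - z.2) ∂γ = ∫ z, wNormSq pw (z.1 - c) ∂γ := by
    refine integral_congr_ae ?_
    filter_upwards [hae] with z hz
    rw [Set.mem_singleton_iff] at hz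
    rw [hz]
  rw [h1, ← h.2.1, integral_map measurable_fst.aemeasurable]
  exact (continuous_wNormSq.comp (by continuity)).aestronglyMeasurable

lemma optimal_coupling_dirac (hp : ∀ j, 0 < pw j) (μ : Measure (PiLp 2 E))
    [IsProbabilityMeasure μ] (c : PiLp 2 E) :
    IsOptimalCoupling pw (μ.prod (Measure.dirac c)) μ (Measure.dirac c) := by
  have hcpl := isCoupling_prod μ (Measure.dirac c)
  refine ⟨hcpl, ?_⟩
  have hset : {r | ∃ γ, IsCoupling γ μ (Measure.dirac c) ∧ r = couplingCost pw γ}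
      = {Real.sqrt (∫ x, wNormSq pw (x - c) ∂μ)} := by
    ext r
    constructor
    · rintro ⟨γ, hγ, rfl⟩
      exact cost_coupling_dirac hp hγ
    · rintro rfl
      exact ⟨_, hcpl, (cost_coupling_dirac hp hcpl).symm⟩
  rw [cost_coupling_dirac hp hcpl]
  unfold W2
  rw [hset, csInf_singleton]

/- ### L² Minkowski inequality for integrals -/

lemma minkowski_int {α : Type*} [MeasurableSpace α] (μ : Measure α) [IsFiniteMeasure μ]
    {a b : α → ℝ} (ha : AEStronglyMeasurable a μ) (hb : AEStronglyMeasurable b μ)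
    (ha0 : 0 ≤ᵐ[μ] a) (hb0 : 0 ≤ᵐ[μ] b) {Ca Cb : ℝ}
    (hCa : ∀ᵐ x ∂μ, a x ≤ Ca) (hCb : ∀ᵐ x ∂μ, b x ≤ Cb) :
    Real.sqrt (∫ x, (a x + b x) ^ 2 ∂μ)
      ≤ Real.sqrt (∫ x, a x ^ 2 ∂μ) + Real.sqrt (∫ x, b x ^ 2 ∂μ) := by
  have hma : MemLp a 2 μ := by
    refine MemLp.of_bound ha Ca ?_
    filter_upwards [ha0, hCa] with x h0 hC
    rwa [Real.norm_of_nonneg h0]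
  have hmb : MemLp b 2 μ := by
    refine MemLp.of_bound hb Cb ?_
    filter_upwards [hb0, hCb] with x h0 hC
    rwa [Real.norm_of_nonneg h0]
  have hia : Integrable (fun x => a x ^ 2) μ := by
    simpa using hma.integrable_sq
  have hib : Integrable (fun x => b x ^ 2) μ := by
    simpa using hmb.integrable_sq
  have hiab : Integrable (fun x => a x * b x) μ := by
    refine Integrable.mono' (integrable_const (max Ca 0 * max Cb 0)) (ha.mul hb) ?_
    filter_upwards [ha0, hb0, hCa, hCb] with x h0a h0b hCa' hCb'
    rw [Real.norm_of_nonneg (mul_nonneg h0a h0b)]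
    exact mul_le_mul (le_max_of_le_left hCa') (le_max_of_le_left hCb') h0b (le_max_right _ _)
  set A := ∫ x, a x ^ 2 ∂μ with hA
  set B := ∫ x, b x ^ 2 ∂μ with hB
  have hA0 : 0 ≤ A := integral_nonneg fun x => sq_nonneg _
  have hB0 : 0 ≤ B := integral_nonneg fun x => sq_nonneg _
  have hCS : ∫ x, a x * b x ∂μ ≤ Real.sqrt A * Real.sqrt B := by
    have hpq : Real.HolderConjugate 2 2 := Real.HolderConjugate.two_two
    have := integral_mul_le_Lp_mul_Lq_of_nonneg hpq ha0 hb0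
      (by rwa [show ENNReal.ofReal (2:ℝ) = 2 by norm_num])
      (by rwa [show ENNReal.ofReal (2:ℝ) = 2 by norm_num])
    calc ∫ x, a x * b x ∂μ
        ≤ (∫ x, a x ^ (2:ℝ) ∂μ) ^ ((1:ℝ)/2) * (∫ x, b x ^ (2:ℝ) ∂μ) ^ ((1:ℝ)/2) := this
      _ = Real.sqrt A * Real.sqrt B := by
          rw [hA, hB]
          congr 1 <;>
          · rw [Real.sqrt_eq_rpow]
            congr 1
            refine integral_congr_ae ?_
            filter_upwards with x
            rw [show (2:ℝ) = ((2:ℕ):ℝ) by norm_num, Real.rpow_natCast]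
  have hexp : ∫ x, (a x + b x) ^ 2 ∂μ
      = A + (2 * ∫ x, a x * b x ∂μ + B) := by
    have : ∀ x, (a x + b x) ^ 2 = a x ^ 2 + (2 * (a x * b x) + b x ^ 2) := fun x => by ring
    rw [integral_congr_ae (Eventually.of_forall this),
      integral_add (f := fun x => a x ^ 2) (g := fun x => 2 * (a x * b x) + b x ^ 2) hia
        ((hiab.const_mul 2).add hib),
      integral_add (f := fun x => 2 * (a x * b x)) (g := fun x => b x ^ 2)
        (hiab.const_mul 2) hib, integral_const_mul]
  have hle : ∫ x, (a x + b x) ^ 2 ∂μ ≤ (Real.sqrt A + Real.sqrt B) ^ 2 := by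
    rw [hexp, add_sq, Real.sq_sqrt hA0, Real.sq_sqrt hB0]
    nlinarith [hCS]
  calc Real.sqrt (∫ x, (a x + b x) ^ 2 ∂μ) ≤ Real.sqrt ((Real.sqrt A + Real.sqrt B) ^ 2) :=
        Real.sqrt_le_sqrt hle
    _ = Real.sqrt A + Real.sqrt B :=
        Real.sqrt_sq (add_nonneg (Real.sqrt_nonneg _) (Real.sqrt_nonneg _))

/- ### gluing and the triangle inequality for `W2` -/

open ProbabilityTheory in
lemma glue_cost (hp : ∀ j, 0 < pw j) (hG : IsCompact G) {μ ν κ : Measure (PiLp 2 E)}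
    (hμ : μ Gᶜ = 0) (hν : ν Gᶜ = 0) (hκ : κ Gᶜ = 0)
    {γ1 γ2 : Measure (PiLp 2 E × PiLp 2 E)}
    (h1 : IsCoupling γ1 μ ν) (h2 : IsCoupling γ2 ν κ) :
    ∃ γ3, IsCoupling γ3 μ κ ∧
      couplingCost pw γ3 ≤ couplingCost pw γ1 + couplingCost pw γ2 := by
  have hγ1p : IsProbabilityMeasure γ1 := h1.1
  have hγ2p : IsProbabilityMeasure γ2 := h2.1
  set ρ : Measure (PiLp 2 E × PiLp 2 E) := γ1.map Prod.swap with hρ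
  have hρprob : IsProbabilityMeasure ρ := Measure.isProbabilityMeasure_map measurable_swap.aemeasurable
  have hρfst : ρ.fst = ν := by
    rw [Measure.fst, hρ, Measure.map_map measurable_fst measurable_swap]
    exact h1.2.2
  have hρsnd : ρ.map Prod.snd = μ := by
    rw [hρ, Measure.map_map measurable_snd measurable_swap]
    exact h1.2.1
  have hfst2 : γ2.fst = ν := h2.2.1
  set k1 := ρ.condKernel
  set k2 := γ2.condKernel
  have hd1 : ν ⊗ₘ k1 = ρ := by rw [← hρfst]; exact ρ.disintegrate _
  have hd2 : ν ⊗ₘ k2 = γ2 := by rw [← hfst2]; exact γ2.disintegrate _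
  have hνp : IsProbabilityMeasure ν := by rw [← hρfst]; infer_instance
  set mm := ν ⊗ₘ (k1 ×ₖ k2) with hmm
  have hmmprob : IsProbabilityMeasure mm := by infer_instance
  have hgA : Measurable fun p : PiLp 2 E × PiLp 2 E × PiLp 2 E => (p.1, p.2.1) :=
    measurable_fst.prodMk (measurable_fst.comp measurable_snd)
  have hgB : Measurable fun p : PiLp 2 E × PiLp 2 E × PiLp 2 E => (p.1, p.2.2) :=
    measurable_fst.prodMk (measurable_snd.comp measurable_snd)
  have claimA : mm.map (fun p => (p.1, p.2.1)) = ρ := by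
    ext s hs
    rw [Measure.map_apply hgA hs, hmm, Measure.compProd_apply (hgA hs), ← hd1,
      Measure.compProd_apply hs]
    refine lintegral_congr fun x => ?_
    have hpre : (Prod.mk x ⁻¹' ((fun p : PiLp 2 E × PiLp 2 E × PiLp 2 E => (p.1, p.2.1)) ⁻¹' s))
        = {p : PiLp 2 E × PiLp 2 E | p.1 ∈ Prod.mk x ⁻¹' s} := rfl
    rw [hpre, ← Kernel.fst_apply' _ _ (measurable_prodMk_left hs), Kernel.fst_prod]
  have claimB : mm.map (fun p => (p.1, p.2.2)) = γ2 := by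
    ext s hs
    rw [Measure.map_apply hgB hs, hmm, Measure.compProd_apply (hgB hs), ← hd2,
      Measure.compProd_apply hs]
    refine lintegral_congr fun x => ?_
    have hpre : (Prod.mk x ⁻¹' ((fun p : PiLp 2 E × PiLp 2 E × PiLp 2 E => (p.1, p.2.2)) ⁻¹' s))
        = {p : PiLp 2 E × PiLp 2 E | p.2 ∈ Prod.mk x ⁻¹' s} := rfl
    rw [hpre, show {p : PiLp 2 E × PiLp 2 E | p.2 ∈ Prod.mk x ⁻¹' s}
        = Prod.snd ⁻¹' (Prod.mk x ⁻¹' s) from rfl, ← Kernel.snd_apply' _ _ (measurable_prodMk_left hs), Kernel.snd_prod]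
  set γ3 := mm.map Prod.snd with hγ3
  have hm21 : mm.map (fun p => p.2.1) = μ := by
    have : (fun p : PiLp 2 E × PiLp 2 E × PiLp 2 E => p.2.1)
        = Prod.snd ∘ (fun p => (p.1, p.2.1)) := rfl
    rw [this, ← Measure.map_map measurable_snd hgA, claimA, hρsnd]
  have hm22 : mm.map (fun p => p.2.2) = κ := by
    have : (fun p : PiLp 2 E × PiLp 2 E × PiLp 2 E => p.2.2)
        = Prod.snd ∘ (fun p => (p.1, p.2.2)) := rfl
    rw [this, ← Measure.map_map measurable_snd hgB, claimB, h2.2.2]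
  have hm1 : mm.map (fun p => p.1) = ν := by
    have : (fun p : PiLp 2 E × PiLp 2 E × PiLp 2 E => p.1)
        = Prod.fst ∘ (fun p => (p.1, p.2.1)) := rfl
    rw [this, ← Measure.map_map measurable_fst hgA, claimA, ← Measure.fst, hρfst]
  have hcpl3 : IsCoupling γ3 μ κ := by
    refine ⟨Measure.isProbabilityMeasure_map measurable_snd.aemeasurable, ?_, ?_⟩
    · rw [hγ3, Measure.map_map measurable_fst measurable_snd]
      exact hm21
    · rw [hγ3, Measure.map_map measurable_snd measurable_snd]
      exact hm22
  refine ⟨γ3, hcpl3, ?_⟩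
  -- the cost bound
  obtain ⟨R, hR⟩ := (hG.prod hG).exists_bound_of_continuousOn
    ((continuous_wNorm.comp (continuous_fst.sub continuous_snd)).continuousOn
      (s := G ×ˢ G))
  have hRbd : ∀ u v : PiLp 2 E, u ∈ G → v ∈ G → wNorm pw (u - v) ≤ R := by
    intro u v hu hv
    have := hR (u, v) (Set.mk_mem_prod hu hv)
    exact (le_abs_self _).trans (by simpa using this)
  have hGm : MeasurableSet G := hG.isClosed.measurableSet
  have hae1 : ∀ᵐ p ∂mm, p.1 ∈ G :=
    ae_map_mem (φ := fun p : PiLp 2 E × PiLp 2 E × PiLp 2 E => p.1) measurable_fst hGm (by rw [hm1]; exact hν)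
  have hae21 : ∀ᵐ p ∂mm, p.2.1 ∈ G :=
    ae_map_mem (φ := fun p : PiLp 2 E × PiLp 2 E × PiLp 2 E => p.2.1) measurable_snd.fst hGm (by rw [hm21]; exact hμ)
  have hae22 : ∀ᵐ p ∂mm, p.2.2 ∈ G :=
    ae_map_mem (φ := fun p : PiLp 2 E × PiLp 2 E × PiLp 2 E => p.2.2) measurable_snd.snd hGm (by rw [hm22]; exact hκ)
  set a : PiLp 2 E × PiLp 2 E × PiLp 2 E → ℝ := fun p => wNorm pw (p.2.1 - p.1) with ha
  set b : PiLp 2 E × PiLp 2 E × PiLp 2 E → ℝ := fun p => wNorm pw (p.1 - p.2.2) with hb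
  have hacont : Continuous a := continuous_wNorm.comp
    ((continuous_fst.comp continuous_snd).sub continuous_fst)
  have hbcont : Continuous b := continuous_wNorm.comp
    (continuous_fst.sub (continuous_snd.comp continuous_snd))
  have haR : ∀ᵐ p ∂mm, a p ≤ R := by
    filter_upwards [hae1, hae21] with p h1' h2' using hRbd _ _ h2' h1'
  have hbR : ∀ᵐ p ∂mm, b p ≤ R := by
    filter_upwards [hae1, hae22] with p h1' h2' using hRbd _ _ h1' h2'
  have hsqint : ∀ (f : PiLp 2 E × PiLp 2 E × PiLp 2 E → ℝ), Continuous f →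
      (∀ᵐ p ∂mm, |f p| ≤ (2 * R + 1) ^ 2) → Integrable f mm := by
    intro f hf hbd
    exact Integrable.mono' (integrable_const _) hf.aestronglyMeasurable hbd
  have key1 : ∫ p, a p ^ 2 ∂mm = ∫ z, wNormSq pw (z.1 - z.2) ∂γ1 := by
    have e1 : ∫ p, a p ^ 2 ∂mm = ∫ p, wNormSq pw (p.2.1 - p.1) ∂mm := by
      refine integral_congr_ae (Eventually.of_forall fun p => ?_)
      rw [ha]; exact sq_wNorm hp _
    have e2 : ∫ q, wNormSq pw (q.2 - q.1) ∂(mm.map (fun p => (p.1, p.2.1)))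
        = ∫ p, wNormSq pw (p.2.1 - p.1) ∂mm := by
      rw [integral_map hgA.aemeasurable]
      exact (continuous_wNormSq.comp (continuous_snd.sub continuous_fst)).aestronglyMeasurable
    have e3 : ∫ q, wNormSq pw (q.2 - q.1) ∂ρ = ∫ z, wNormSq pw (z.1 - z.2) ∂γ1 := by
      rw [hρ, integral_map measurable_swap.aemeasurable]
      · rfl
      · exact (continuous_wNormSq.comp (continuous_snd.sub continuous_fst)).aestronglyMeasurable
    rw [e1, ← e2, claimA, e3]
  have key2 : ∫ p, b p ^ 2 ∂mm = ∫ z, wNormSq pw (z.1 - z.2) ∂γ2 := by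
    have e1 : ∫ p, b p ^ 2 ∂mm = ∫ p, wNormSq pw (p.1 - p.2.2) ∂mm := by
      refine integral_congr_ae (Eventually.of_forall fun p => ?_)
      rw [hb]; exact sq_wNorm hp _
    have e2 : ∫ q, wNormSq pw (q.1 - q.2) ∂(mm.map (fun p => (p.1, p.2.2)))
        = ∫ p, wNormSq pw (p.1 - p.2.2) ∂mm := by
      rw [integral_map hgB.aemeasurable]
      exact (continuous_wNormSq.comp (continuous_fst.sub continuous_snd)).aestronglyMeasurable
    rw [e1, ← e2, claimB]
  have keyc : ∫ z, wNormSq pw (z.1 - z.2) ∂γ3 = ∫ p, wNormSq pw (p.2.1 - p.2.2) ∂mm := by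
    rw [hγ3, integral_map measurable_snd.aemeasurable]
    exact (continuous_wNormSq.comp (continuous_fst.sub continuous_snd)).aestronglyMeasurable
  have hmono : ∫ p, wNormSq pw (p.2.1 - p.2.2) ∂mm ≤ ∫ p, (a p + b p) ^ 2 ∂mm := by
    refine integral_mono_ae ?_ ?_ ?_
    · refine hsqint _ (continuous_wNormSq.comp
        ((continuous_fst.comp continuous_snd).sub (continuous_snd.comp continuous_snd))) ?_
      filter_upwards [hae21, hae22] with p h1' h2'
      have hw : wNorm pw (p.2.1 - p.2.2) ≤ 2 * R + 1 := by
        have h3 := hRbd _ _ h1' h2'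
        have h4 : 0 ≤ wNorm pw (p.2.1 - p.2.2) := wNorm_nonneg _
        nlinarith
      rw [abs_of_nonneg (wNormSq_nonneg hp _)]
      exact wNormSq_le_sq hp hw
    · refine hsqint _ ((hacont.add hbcont).pow 2) ?_
      filter_upwards [haR, hbR] with p h1' h2'
      rw [abs_of_nonneg (sq_nonneg _)]
      have h0 : 0 ≤ a p + b p := add_nonneg (wNorm_nonneg _) (wNorm_nonneg _)
      have : a p + b p ≤ 2 * R + 1 := by
        have h3 : 0 ≤ a p := wNorm_nonneg _
        have h4 : 0 ≤ b p := wNorm_nonneg _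
        nlinarith
      exact pow_le_pow_left₀ h0 this 2
    · refine Eventually.of_forall fun p => ?_
      show wNormSq pw (p.2.1 - p.2.2) ≤ (a p + b p) ^ 2
      have hsub : p.2.1 - p.2.2 = (p.2.1 - p.1) + (p.1 - p.2.2) := by abel
      have e : wNormSq pw (p.2.1 - p.2.2)
          = wNorm pw ((p.2.1 - p.1) + (p.1 - p.2.2)) ^ 2 := by
        rw [sq_wNorm hp, hsub]
      rw [e]
      have := wNorm_add_le hp (p.2.1 - p.1) (p.1 - p.2.2)
      exact pow_le_pow_left₀ (wNorm_nonneg _) this 2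
  have hmink := minkowski_int mm hacont.aestronglyMeasurable hbcont.aestronglyMeasurable
    (Eventually.of_forall fun p => wNorm_nonneg _)
    (Eventually.of_forall fun p => wNorm_nonneg _) haR hbR
  unfold couplingCost
  calc Real.sqrt (∫ z, wNormSq pw (z.1 - z.2) ∂γ3)
      ≤ Real.sqrt (∫ p, (a p + b p) ^ 2 ∂mm) := by
        rw [keyc]; exact Real.sqrt_le_sqrt hmono
    _ ≤ Real.sqrt (∫ p, a p ^ 2 ∂mm) + Real.sqrt (∫ p, b p ^ 2 ∂mm) := hmink
    _ = Real.sqrt (∫ z, wNormSq pw (z.1 - z.2) ∂γ1)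
          + Real.sqrt (∫ z, wNormSq pw (z.1 - z.2) ∂γ2) := by rw [key1, key2]

lemma W2_triangle (hp : ∀ j, 0 < pw j) (hG : IsCompact G) {μ ν κ : Measure (PiLp 2 E)}
    (hμp : IsProbabilityMeasure μ) (hνp : IsProbabilityMeasure ν)
    (hκp : IsProbabilityMeasure κ)
    (hμ : μ Gᶜ = 0) (hν : ν Gᶜ = 0) (hκ : κ Gᶜ = 0) :
    W2 pw μ κ ≤ W2 pw μ ν + W2 pw ν κ := by
  refine le_of_forall_pos_le_add fun ε hε => ?_
  have hne1 : {r | ∃ γ, IsCoupling γ μ ν ∧ r = couplingCost pw γ}.Nonempty :=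
    ⟨couplingCost pw (μ.prod ν), μ.prod ν, isCoupling_prod μ ν, rfl⟩
  have hne2 : {r | ∃ γ, IsCoupling γ ν κ ∧ r = couplingCost pw γ}.Nonempty :=
    ⟨couplingCost pw (ν.prod κ), ν.prod κ, isCoupling_prod ν κ, rfl⟩
  have hW1 : W2 pw μ ν = sInf {r | ∃ γ, IsCoupling γ μ ν ∧ r = couplingCost pw γ} := rfl
  have hW2 : W2 pw ν κ = sInf {r | ∃ γ, IsCoupling γ ν κ ∧ r = couplingCost pw γ} := rfl
  obtain ⟨r1, hr1mem, hr1⟩ := exists_lt_of_csInf_lt hne1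
    (show sInf _ < W2 pw μ ν + ε / 2 by rw [← hW1]; linarith)
  obtain ⟨r2, hr2mem, hr2⟩ := exists_lt_of_csInf_lt hne2
    (show sInf _ < W2 pw ν κ + ε / 2 by rw [← hW2]; linarith)
  obtain ⟨γ1, hγ1, rfl⟩ := hr1mem
  obtain ⟨γ2, hγ2, rfl⟩ := hr2mem
  obtain ⟨γ3, hγ3, hcost⟩ := glue_cost hp hG hμ hν hκ hγ1 hγ2
  have := W2_le_cost (pw := pw) hγ3
  linarith

/- ### invariant measures are concentrated on the fixed-point set -/

lemma invariant_conc_C (hp : ∀ j, 0 < pw j) (hη : ∀ i, 0 ≤ η i) (hηsum : ∑ i : I, η i = 1)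
    (hT : ∀ i, Continuous (T i)) (hG : IsCompact G)
    {C : Set (PiLp 2 E)} (hC : C = {x ∈ G | ∀ i, 0 < η i → T i x = x})
    {y₀ : PiLp 2 E} (hy₀ : y₀ ∈ C)
    (hpara : ∀ y ∈ C, ∀ x ∈ G \ C,
      ∑ i : I, η i * wNormSq pw (T i x - y) < wNormSq pw (x - y))
    {π : Measure (PiLp 2 E)} (hπ : markovOp η T π = π) (hP2 : MemP2 G π) :
    π Cᶜ = 0 := by
  have hπprob : IsProbabilityMeasure π := hP2.1
  have hconc : π Gᶜ = 0 := hP2.2.1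
  set h : PiLp 2 E → ℝ := fun x => wNormSq pw (x - y₀) with hh
  have hhcont : Continuous h := continuous_wNormSq.comp (continuous_id.sub continuous_const)
  have hint : Integrable h π := integrable_of_conc hG hconc hhcont
  have hintT : ∀ i, Integrable (fun x => h (T i x)) π := fun i =>
    integrable_of_conc hG hconc (hhcont.comp (hT i))
  have hkey : ∫ x, h x ∂π = ∑ i : I, η i * ∫ x, h (T i x) ∂π := by
    conv_lhs => rw [← hπ]
    exact markovOp_integral hη (fun i => (hT i).measurable) π hhcont hintT
  set g : PiLp 2 E → ℝ := fun x => h x - ∑ i : I, η i * h (T i x) with hg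
  have hgcont : Continuous g := by
    refine hhcont.sub (continuous_finset_sum _ fun i _ => ?_)
    exact continuous_const.mul (hhcont.comp (hT i))
  have hgint : Integrable g π := integrable_of_conc hG hconc hgcont
  have hgzero : ∫ x, g x ∂π = 0 := by
    have hsumint : Integrable (fun x => ∑ i : I, η i * h (T i x)) π :=
      integrable_of_conc hG hconc (continuous_finset_sum _ fun i _ =>
        continuous_const.mul (hhcont.comp (hT i)))
    rw [hg]
    rw [integral_sub hint hsumint, integral_finset_sum _ (fun i _ => (hintT i).const_mul _)]
    have : ∀ i : I, ∫ x, η i * h (T i x) ∂π = η i * ∫ x, h (T i x) ∂π := fun i =>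
      integral_const_mul _ _
    rw [Finset.sum_congr rfl fun i _ => this i, ← hkey, sub_self]
  have hg_nonneg_onG : ∀ x ∈ G, 0 ≤ g x := by
    intro x hx
    by_cases hxC : x ∈ C
    · have : ∑ i : I, η i * h (T i x) = ∑ i : I, η i * h x := by
        refine Finset.sum_congr rfl fun i _ => ?_
        rcases lt_or_ge 0 (η i) with hi | hi
        · rw [hC] at hxC
          rw [hxC.2 i hi]
        · have : η i = 0 := le_antisymm hi (hη i)
          rw [this, zero_mul, zero_mul]
      rw [hg]
      simp only [this, ← Finset.sum_mul, hηsum, one_mul, sub_self, le_refl]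
    · have := hpara y₀ hy₀ x ⟨hx, hxC⟩
      rw [hg]
      simp only [hh] at this ⊢
      linarith
  have hg_ae_nonneg : 0 ≤ᵐ[π] g := by
    filter_upwards [ae_mem_of_compl hconc] with x hx using hg_nonneg_onG x hx
  have hgae : g =ᵐ[π] 0 :=
    (integral_eq_zero_iff_of_nonneg_ae hg_ae_nonneg hgint).1 hgzero
  have haeC : ∀ᵐ x ∂π, x ∈ C := by
    filter_upwards [hgae, ae_mem_of_compl hconc] with x hgx hxG
    by_contra hxC
    have := hpara y₀ hy₀ x ⟨hxG, hxC⟩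
    have : g x > 0 := by rw [hg]; simp only [hh] at this ⊢; linarith
    rw [Pi.zero_apply] at hgx
    linarith
  rw [ae_iff] at haeC
  exact haeC

/- ### cost bound for the one-step coupling -/

lemma wsum_const_smul (hη : ∀ i, 0 ≤ η i) (hηsum : ∑ i : I, η i = 1)
    (μ0 : Measure (PiLp 2 E)) : (∑ i : I, (ENNReal.ofReal (η i)) • μ0) = μ0 := by
  rw [← Finset.sum_smul, ← ENNReal.ofReal_sum_of_nonneg (fun i _ => hη i), hηsum,
    ENNReal.ofReal_one, one_smul]

lemma W2_markov_le (hp : ∀ j, 0 < pw j) (hη : ∀ i, 0 ≤ η i) (hηsum : ∑ i : I, η i = 1)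
    (hT : ∀ i, Continuous (T i)) (hG : IsCompact G)
    {C : Set (PiLp 2 E)} (hC : C = {x ∈ G | ∀ i, 0 < η i → T i x = x}) (hCm : MeasurableSet C)
    {μ π : Measure (PiLp 2 E)} (hμ2 : MemP2 G μ) (hπC : π Cᶜ = 0)
    {γ : Measure (PiLp 2 E × PiLp 2 E)} (hγ : IsCoupling γ μ π) :
    W2 pw μ (markovOp η T μ) ≤ Real.sqrt (∫ z, discrep pw η T z ∂γ) := by
  have hμprob : IsProbabilityMeasure μ := hμ2.1
  have hμconc : μ Gᶜ = 0 := hμ2.2.1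
  have hγprob : IsProbabilityMeasure γ := hγ.1
  set g : I → PiLp 2 E → PiLp 2 E × PiLp 2 E := fun i x => (x, T i x) with hgdef
  have hgmeas : ∀ i, Measurable (g i) := fun i =>
    measurable_id.prodMk (hT i).measurable
  set γ' := ∑ i : I, (ENNReal.ofReal (η i)) • μ.map (g i) with hγ'
  have hcpl : IsCoupling γ' μ (markovOp η T μ) := by
    refine ⟨wsum_prob η hη hηsum _ fun i => Measure.isProbabilityMeasure_map (hgmeas i).aemeasurable,
      ?_, ?_⟩
    · rw [hγ', map_wsum η _ measurable_fst]
      have : ∀ i : I, (μ.map (g i)).map Prod.fst = μ := by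
        intro i
        rw [Measure.map_map measurable_fst (hgmeas i)]
        have : (Prod.fst ∘ g i) = id := rfl
        rw [this, Measure.map_id]
      rw [Finset.sum_congr rfl fun i _ => by rw [this i]]
      exact wsum_const_smul hη hηsum μ
    · rw [hγ', map_wsum η _ measurable_snd]
      unfold markovOp
      refine Finset.sum_congr rfl fun i _ => ?_
      rw [Measure.map_map measurable_snd (hgmeas i)]
      rfl
  have hbound : ∀ i : I, ∃ B : ℝ, ∀ x ∈ G, |wNormSq pw (x - T i x)| ≤ B := by
    intro i
    obtain ⟨B, hB⟩ := hG.exists_bound_of_continuousOn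
      ((continuous_wNormSq.comp (continuous_id.sub (hT i))).continuousOn (s := G))
    exact ⟨B, fun x hx => by simpa using hB x hx⟩
  have hintμ : ∀ i : I, Integrable (fun x => wNormSq pw (x - T i x)) μ :=
    fun i => integrable_of_conc hG hμconc (continuous_wNormSq.comp (continuous_id.sub (hT i)))
  have hcost : couplingCost pw γ' = Real.sqrt (∑ i : I, η i * ∫ x, wNormSq pw (x - T i x) ∂μ) := by
    unfold couplingCost
    congr 1
    rw [hγ', integral_wsum_map η hη μ g hgmeas (fun z => wNormSq pw (z.1 - z.2)) (fun i =>
      Continuous.aestronglyMeasurable (continuous_wNormSq.comp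
        (continuous_fst.sub continuous_snd)))
      (fun i => hintμ i)]
  have haeC : ∀ᵐ z ∂γ, z.2 ∈ C :=
    ae_map_mem (φ := fun z : PiLp 2 E × PiLp 2 E => z.2) measurable_snd hCm (by rw [hγ.2.2]; exact hπC)
  have haeG : ∀ᵐ z ∂γ, z.1 ∈ G :=
    ae_map_mem (φ := fun z : PiLp 2 E × PiLp 2 E => z.1) measurable_fst hG.isClosed.measurableSet
      (by rw [hγ.2.1]; exact hμconc)
  have hdis : ∫ z, discrep pw η T z ∂γ = ∑ i : I, η i * ∫ x, wNormSq pw (x - T i x) ∂μ := by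
    have e1 : ∫ z, discrep pw η T z ∂γ
        = ∫ z, ∑ i : I, η i * wNormSq pw (z.1 - T i z.1) ∂γ := by
      refine integral_congr_ae ?_
      filter_upwards [haeC] with z hz
      unfold discrep
      refine Finset.sum_congr rfl fun i _ => ?_
      rcases lt_or_ge 0 (η i) with hi | hi
      · rw [hC] at hz
        have : T i z.2 = z.2 := hz.2 i hi
        rw [this, sub_self, sub_zero]
      · have : η i = 0 := le_antisymm hi (hη i)
        rw [this, zero_mul, zero_mul]
    have hintγ : ∀ i : I, Integrable (fun z : PiLp 2 E × PiLp 2 E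
        => η i * wNormSq pw (z.1 - T i z.1)) γ := by
      intro i
      obtain ⟨B, hB⟩ := hbound i
      refine Integrable.mono' (integrable_const (|η i| * B))
        ((continuous_const.mul ((continuous_wNormSq.comp
          (continuous_id.sub (hT i))).comp continuous_fst)).aestronglyMeasurable) ?_
      filter_upwards [haeG] with z hz
      rw [Real.norm_eq_abs, abs_mul]
      have h1 := hB z.1 hz
      have h2 : (0:ℝ) ≤ |η i| := abs_nonneg _
      exact mul_le_mul_of_nonneg_left h1 h2
    rw [e1, integral_finset_sum _ fun i _ => hintγ i]
    refine Finset.sum_congr rfl fun i _ => ?_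
    rw [integral_const_mul]
    congr 1
    have e2 : ∫ z : PiLp 2 E × PiLp 2 E, wNormSq pw (z.1 - T i z.1) ∂γ
        = ∫ x, wNormSq pw (x - T i x) ∂(γ.map Prod.fst) :=
      (integral_map measurable_fst.aemeasurable
        (continuous_wNormSq.comp (continuous_id.sub (hT i))).aestronglyMeasurable).symm
    rw [e2, hγ.2.1]
  rw [← hdis] at hcost
  rw [← hcost]
  exact W2_le_cost hcpl

/- ### the gauge order lemma -/

lemma sub_theta_nonneg {θ ψinv : ℝ → ℝ} (hθcont : ContinuousOn θ (Set.Ici 0)) (hθ0 : θ 0 = 0)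
    (hψmono : StrictMonoOn ψinv (Set.Ici 0)) (hψ0 : ψinv 0 = 0)
    (hψleft : ∀ t, 0 ≤ t → ψinv (t - θ t) = t)
    (hψright : ∀ s, 0 ≤ s → ψinv s - θ (ψinv s) = s) :
    ∀ t, 0 ≤ t → 0 ≤ t - θ t := by
  intro t ht
  by_contra hlt
  push_neg at hlt
  have ht0 : t ≠ 0 := by
    intro h
    rw [h, hθ0] at hlt
    simp at hlt
  have htpos : 0 < t := lt_of_le_of_ne ht (Ne.symm ht0)
  set u := ψinv 1 with hu
  have hu1 : u - θ u = 1 := hψright 1 (by norm_num)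
  have hupos : 0 < u := by
    have := hψmono (Set.mem_Ici.2 (le_refl (0:ℝ))) (Set.mem_Ici.2 (by norm_num : (0:ℝ) ≤ 1))
      (by norm_num : (0:ℝ) < 1)
    rwa [hψ0] at this
  set f : ℝ → ℝ := fun s => s - θ s with hf
  have hfcont : ContinuousOn f (Set.Ici 0) := continuousOn_id.sub hθcont
  have hinj : ∀ a ∈ Set.Ici (0:ℝ), ∀ b ∈ Set.Ici (0:ℝ), f a = f b → a = b := by
    intro a ha b hb hab
    have h1 : ψinv (f a) = a := hψleft a ha
    have h2 : ψinv (f b) = b := hψleft b hb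
    rw [← h1, ← h2, hab]
  have hsub : Set.uIcc t u ⊆ Set.Ici 0 := by
    intro v hv
    have := hv.1
    have hmin : 0 ≤ min t u := le_min htpos.le hupos.le
    exact le_trans hmin this
  have hIVT := intermediate_value_uIcc (hfcont.mono hsub)
  have h0mem : (0:ℝ) ∈ Set.Icc (f t) (f u) := by
    constructor
    · show f t ≤ 0
      simp only [hf]
      linarith
    · show (0:ℝ) ≤ f u
      simp only [hf]
      linarith
  have h0mem' : (0:ℝ) ∈ Set.uIcc (f t) (f u) := by
    rw [Set.uIcc_of_le (by simp only [hf]; linarith : f t ≤ f u)]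
    exact h0mem
  obtain ⟨v, hv, hfv⟩ := hIVT h0mem'
  have hv0 : v ∈ Set.Ici (0:ℝ) := hsub hv
  have : v = 0 := by
    refine hinj v hv0 0 (Set.mem_Ici.2 (le_refl _)) ?_
    rw [hfv]
    simp only [hf, hθ0, sub_zero]
  have hvpos : 0 < v := by
    have := hv.1
    have hmin : 0 < min t u := lt_min htpos hupos
    linarith
  rw [this] at hvpos
  exact lt_irrefl _ hvpos


/-- necessity of gauge metric subregularity of `Ψ` with gauge `(Id − θ)⁻¹` when all
sequences of measures generated by the Markov operator are gauge monotone with rate `θ`. -/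
theorem statement13
    (M : I → Finset (Fin m)) (hM : ∀ i, (M i).Nonempty)
    (i₁ : I) (hi₁ : M i₁ = Finset.univ)
    (η : I → ℝ) (hη : ∀ i, 0 ≤ η i) (hηsum : ∑ i : I, η i = 1)
    (pw : Fin m → ℝ) (hpw : ∀ j, pw j = ∑ i : I, if j ∈ M i then η i else 0)
    (hp : ∀ j, 0 < pw j)
    (T' : ∀ j, PiLp 2 E → E j) (hcont : ∀ j, Continuous (T' j))
    (G : Set (PiLp 2 E)) (hG : IsCompact G)
    (hself : ∀ i, Set.MapsTo (blockMap M T' i) G G)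
    (C : Set (PiLp 2 E))
    (hC : C = {x ∈ G | ∀ i, 0 < η i → blockMap M T' i x = x})
    (hCne : C.Nonempty)
    (hpara : ∀ y ∈ C, ∀ x ∈ G \ C,
      ∑ i : I, η i * wNormSq pw (blockMap M T' i x - y) < wNormSq pw (x - y))
    (θ : ℝ → ℝ) (tbar : ℝ)
    (hθcont : ContinuousOn θ (Set.Ici 0)) (hθ0 : θ 0 = 0)
    (hθ : ∀ t, 0 < t → t < tbar → 0 < θ t ∧ θ t ≤ t)
    (hmono : ∀ μ₀ : Measure (PiLp 2 E), MemP2 G μ₀ →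
      ∀ k : ℕ, dInv pw η (blockMap M T') G ((markovOp η (blockMap M T'))^[k + 1] μ₀)
        ≤ θ (dInv pw η (blockMap M T') G ((markovOp η (blockMap M T'))^[k] μ₀)))
    (ψinv : ℝ → ℝ)
    (hψcont : ContinuousOn ψinv (Set.Ici 0)) (hψmono : StrictMonoOn ψinv (Set.Ici 0))
    (hψ0 : ψinv 0 = 0)
    (hψleft : ∀ t, 0 ≤ t → ψinv (t - θ t) = t)
    (hψright : ∀ s, 0 ≤ s → ψinv s - θ (ψinv s) = s) :
    ∀ μ : Measure (PiLp 2 E), MemP2 G μ →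
      dInv pw η (blockMap M T') G μ ≤ ψinv (Psi pw η (blockMap M T') G μ) := by
  intro μ hμ2
  have hTcont : ∀ i, Continuous (blockMap M T' i) := by
    intro i
    unfold blockMap
    refine (PiLp.continuous_toLp 2 E).comp (continuous_pi fun j => ?_)
    by_cases hj : j ∈ M i
    · simpa [hj] using hcont j
    · simpa [hj] using (PiLp.continuous_apply 2 E j)
  have hTm : ∀ i, Measurable (blockMap M T' i) := fun i => (hTcont i).measurable
  obtain ⟨c, hc⟩ := hCne
  have hcG : c ∈ G := by rw [hC] at hc; exact hc.1
  have hcfix : ∀ i, 0 < η i → blockMap M T' i c = c := by rw [hC] at hc; exact hc.2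
  have hCclosed : IsClosed C := by
    rw [hC]
    have : {x ∈ G | ∀ i, 0 < η i → blockMap M T' i x = x}
        = G ∩ ⋂ i : I, {x | 0 < η i → blockMap M T' i x = x} := by
      ext x; simp [Set.mem_iInter]
    rw [this]
    refine hG.isClosed.inter (isClosed_iInter fun i => ?_)
    by_cases hi : 0 < η i
    · have : {x : PiLp 2 E | 0 < η i → blockMap M T' i x = x}
          = {x | blockMap M T' i x = x} := by ext x; simp [hi]
      rw [this]
      exact isClosed_eq (hTcont i) continuous_id
    · have : {x : PiLp 2 E | 0 < η i → blockMap M T' i x = x} = Set.univ := by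
        ext x; simp [hi]
      rw [this]
      exact isClosed_univ
  have hCm : MeasurableSet C := hCclosed.measurableSet
  have hμprob : IsProbabilityMeasure μ := hμ2.1
  have hinv_dirac : markovOp η (blockMap M T') (Measure.dirac c) = Measure.dirac c :=
    markovOp_dirac hTm hηsum hη hcfix
  have hdP2 : MemP2 G (Measure.dirac c) := memP2_dirac hG hcG
  set d := dInv pw η (blockMap M T') G μ with hd
  have hd0 : 0 ≤ d := dInv_nonneg μ
  have hsub0 : 0 ≤ d - θ d :=
    sub_theta_nonneg hθcont hθ0 hψmono hψ0 hψleft hψright d hd0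
  have hPsi0 : 0 ≤ Psi pw η (blockMap M T') G μ := Psi_nonneg μ
  have key : d - θ d ≤ Psi pw η (blockMap M T') G μ := by
    have hmain : ∀ ε : ℝ, 0 < ε → d - θ d ≤ Psi pw η (blockMap M T') G μ + ε := by
      intro ε hε
      -- near-optimal element of the Psi infimum
      have hSne : {r | ∃ π γ, markovOp η (blockMap M T') π = π ∧ MemP2 G π ∧
          IsOptimalCoupling pw γ μ π ∧
          r = Real.sqrt (∫ z, discrep pw η (blockMap M T') z ∂γ)}.Nonempty :=
        ⟨_, Measure.dirac c, μ.prod (Measure.dirac c), hinv_dirac, hdP2,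
          optimal_coupling_dirac hp μ c, rfl⟩
      have hPsidef : Psi pw η (blockMap M T') G μ = sInf _ := rfl
      obtain ⟨r, hrmem, hrlt⟩ := exists_lt_of_csInf_lt hSne
        (show sInf _ < Psi pw η (blockMap M T') G μ + ε / 2 by
          rw [← hPsidef]; linarith)
      obtain ⟨π, γ, hπinv, hπP2, hopt, rfl⟩ := hrmem
      have hπC : π Cᶜ = 0 :=
        invariant_conc_C hp hη hηsum hTcont hG hC hc hpara hπinv hπP2
      have hW1 : W2 pw μ (markovOp η (blockMap M T') μ)
          ≤ Real.sqrt (∫ z, discrep pw η (blockMap M T') z ∂γ) :=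
        W2_markov_le hp hη hηsum hTcont hG hC hCm hμ2 hπC hopt.1
      -- one iteration of the monotonicity assumption
      have hmono0 := hmono μ hμ2 0
      simp only [Function.iterate_one, Function.iterate_zero, id_eq] at hmono0
      -- near-optimal invariant measure for the pushforward
      have hDne : {r | ∃ π', markovOp η (blockMap M T') π' = π' ∧ MemP2 G π' ∧
          r = W2 pw (markovOp η (blockMap M T') μ) π'}.Nonempty :=
        ⟨_, Measure.dirac c, hinv_dirac, hdP2, rfl⟩
      have hdInvP : dInv pw η (blockMap M T') G (markovOp η (blockMap M T') μ) = sInf _ := rfl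
      obtain ⟨r2, hr2mem, hr2lt⟩ := exists_lt_of_csInf_lt hDne
        (show sInf _ < θ d + ε / 2 by
          rw [← hdInvP]
          have : dInv pw η (blockMap M T') G (markovOp η (blockMap M T') μ) ≤ θ d := hmono0
          linarith)
      obtain ⟨π', hπ'inv, hπ'P2, rfl⟩ := hr2mem
      have hPμP2 : MemP2 G (markovOp η (blockMap M T') μ) :=
        markovOp_memP2 hη hηsum hTm hself hG hμ2
      have htri : W2 pw μ π' ≤ W2 pw μ (markovOp η (blockMap M T') μ)
          + W2 pw (markovOp η (blockMap M T') μ) π' :=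
        W2_triangle hp hG hμprob hPμP2.1 hπ'P2.1 hμ2.2.1 hPμP2.2.1 hπ'P2.2.1
      have hd_le : d ≤ W2 pw μ π' := dInv_le hπ'inv hπ'P2
      linarith
    by_contra hcon
    push_neg at hcon
    have := hmain ((d - θ d - Psi pw η (blockMap M T') G μ) / 2) (by linarith)
    linarith
  have h1 : d = ψinv (d - θ d) := (hψleft d hd0).symm
  rw [h1]
  exact hψmono.monotoneOn (Set.mem_Ici.2 hsub0) (Set.mem_Ici.2 hPsi0) key
end
end
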